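/- Packing version of the main theorem (value form): Let A be a nonnegative k×n integer matrix, b ∈ ℤ^k, d ∈ ℤ^n, c ∈ ℝ^n all nonnegative, and γ ≥ k a positive integer. Let L be the convex hull of the union, over all integer vectors g with 0 ≤ g ≤ d, A g ≤ b, ∑ g_i ≤ γ, of the sets P_g = {x + g : 0 ≤ x ≤ d^g, A x ≤ b^g}, where for ∑ g_i = γ one sets b^g = b − A g, d^g_i = d_i − g_i for i ≤ μ(g) := min{i : g_i > 0} and d^g_i = 0 otherwise, and for ∑ g_i < γ one sets b^g = 0, d^g = 0. Then max{c·y : y ∈ L} ≤ (1 − k/γ)^{-1} · max{c·x : x ∈ ℤ^n, 0 ≤ x ≤ d, A x ≤ b}, i.e., the integrality gap of L is at most (1 − k/γ)^{-1}. -/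
import Mathlib
open Finset

noncomputable def frSet {n : ℕ} (x : Fin n → ℝ) : Finset (Fin n) :=
  by classical exact Finset.univ.filter fun i => Int.fract (x i) ≠ 0

lemma mem_frSet {n : ℕ} {x : Fin n → ℝ} {i : Fin n} :
    i ∈ frSet x ↔ Int.fract (x i) ≠ 0 := by
  classical simp [frSet]

lemma step_lemma {n k : ℕ} (A : Matrix (Fin k) (Fin n) ℕ) (u : Fin n → ℕ) (β : Fin k → ℝ)
    (c : Fin n → ℝ) (x : Fin n → ℝ)
    (hx0 : ∀ i, 0 ≤ x i) (hxu : ∀ i, x i ≤ u i)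
    (hA : ∀ r, ∑ i, (A r i : ℝ) * x i ≤ β r)
    (hF : k < (frSet x).card) :
    ∃ x' : Fin n → ℝ, (∀ i, 0 ≤ x' i) ∧ (∀ i, x' i ≤ u i) ∧
      (∀ r, ∑ i, (A r i : ℝ) * x' i ≤ β r) ∧
      (∑ i, c i * x i ≤ ∑ i, c i * x' i) ∧ (frSet x').card < (frSet x).card := by
  classical
  set F := frSet x with hFdef
  -- a nonzero kernel vector supported on F
  have hker : ∃ w : Fin n → ℝ, (∀ i, i ∉ F → w i = 0) ∧
      (∀ r, ∑ i, (A r i : ℝ) * w i = 0) ∧ (∃ i, w i ≠ 0) := by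
    have hnotinj : ¬ Function.Injective
        ((Matrix.of fun (r : Fin k) (i : ↥F) => (A r i : ℝ)).mulVecLin) := by
      intro h
      have h2 := LinearMap.finrank_le_finrank_of_injective h
      rw [Module.finrank_fintype_fun_eq_card, Module.finrank_fintype_fun_eq_card,
        Fintype.card_coe, Fintype.card_fin] at h2
      omega
    rw [← LinearMap.ker_eq_bot] at hnotinj
    obtain ⟨v, hv0, hvne⟩ := Submodule.exists_mem_ne_zero_of_ne_bot hnotinj
    rw [LinearMap.mem_ker] at hv0
    refine ⟨fun i => if h : i ∈ F then v ⟨i, h⟩ else 0, fun i hi => dif_neg hi, ?_, ?_⟩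
    · intro r
      have hrow : (∑ i : ↥F, (A r i : ℝ) * v i) = 0 := by
        have := congrFun hv0 r
        simpa [Matrix.mulVecLin, Matrix.mulVec, dotProduct] using this
      rw [← Finset.sum_subset (Finset.subset_univ F)
        (fun i _ hi => by simp [dif_neg hi])]
      rw [← Finset.sum_attach F (fun i => (A r i : ℝ) * if h : i ∈ F then v ⟨i, h⟩ else 0)]
      rw [← hrow]
      exact Finset.sum_congr rfl fun i _ => by rw [dif_pos i.2]
    · obtain ⟨j, hj⟩ := Function.ne_iff.mp hvne
      exact ⟨j, by simpa [dif_pos j.2] using hj⟩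
  obtain ⟨w0, hw0supp, hw0row, hw0ne⟩ := hker
  have main : ∀ w : Fin n → ℝ, (∀ i, i ∉ F → w i = 0) →
      (∀ r, ∑ i, (A r i : ℝ) * w i = 0) → (∃ i, w i ≠ 0) →
      0 ≤ ∑ i, c i * w i →
      ∃ x' : Fin n → ℝ, (∀ i, 0 ≤ x' i) ∧ (∀ i, x' i ≤ u i) ∧
        (∀ r, ∑ i, (A r i : ℝ) * x' i ≤ β r) ∧
        (∑ i, c i * x i ≤ ∑ i, c i * x' i) ∧ (frSet x').card < (frSet x).card := by
    intro w hwsupp hwrow hwne hwc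
    set G : Finset (Fin n) := Finset.univ.filter fun i => w i ≠ 0 with hGdef
    have hGmem : ∀ i, i ∈ G ↔ w i ≠ 0 := by intro i; simp [hGdef]
    have hGne : G.Nonempty := by
      obtain ⟨i, hi⟩ := hwne; exact ⟨i, (hGmem i).mpr hi⟩
    have hGF : ∀ i ∈ G, i ∈ F := by
      intro i hi
      by_contra h
      exact ((hGmem i).mp hi) (hwsupp i h)
    have hfloor : ∀ i ∈ G, (⌊x i⌋ : ℝ) < x i := by
      intro i hi
      have hfr : Int.fract (x i) ≠ 0 := by
        have := hGF i hi; rw [hFdef, mem_frSet] at this; exact this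
      have h1 : 0 < Int.fract (x i) := lt_of_le_of_ne (Int.fract_nonneg _) (Ne.symm hfr)
      rw [← Int.self_sub_floor] at h1; linarith
    have hceil : ∀ i ∈ G, x i < (⌈x i⌉ : ℝ) := by
      intro i hi
      have hfr : Int.fract (x i) ≠ 0 := by
        have := hGF i hi; rw [hFdef, mem_frSet] at this; exact this
      rcases lt_or_eq_of_le (Int.le_ceil (x i)) with h | h
      · exact h
      · exact absurd (by rw [h, Int.fract_intCast]) hfr
    set δ : Fin n → ℝ := fun i =>
      if 0 < w i then ((⌈x i⌉ : ℝ) - x i) / w i else ((⌊x i⌋ : ℝ) - x i) / w i with hδdef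
    have hδ : ∀ i, δ i =
        if 0 < w i then ((⌈x i⌉ : ℝ) - x i) / w i else ((⌊x i⌋ : ℝ) - x i) / w i :=
      fun i => rfl
    have hδpos : ∀ i ∈ G, 0 < δ i := by
      intro i hi
      have hwne' : w i ≠ 0 := (hGmem i).mp hi
      rcases lt_trichotomy (w i) 0 with h | h | h
      · rw [hδ i, if_neg (by linarith)]
        exact div_pos_of_neg_of_neg (by linarith [hfloor i hi]) h
      · exact absurd h hwne'
      · rw [hδ i, if_pos h]
        exact div_pos (by linarith [hceil i hi]) h
    set t := G.inf' hGne δ with htdef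
    have ht : 0 < t := (Finset.lt_inf'_iff hGne).mpr hδpos
    have htle : ∀ i ∈ G, t ≤ δ i := fun i hi => Finset.inf'_le δ hi
    obtain ⟨i₁, hi₁G, hti₁⟩ := Finset.exists_mem_eq_inf' hGne δ
    have htδ : t = δ i₁ := by rw [htdef]; exact hti₁
    set x' : Fin n → ℝ := fun i => x i + t * w i with hx'def
    have hx'eq : ∀ i, x' i = x i + t * w i := fun i => rfl
    have hbound : ∀ i ∈ G, (⌊x i⌋ : ℝ) ≤ x' i ∧ x' i ≤ (⌈x i⌉ : ℝ) := by
      intro i hi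
      have hwne' : w i ≠ 0 := (hGmem i).mp hi
      rcases lt_or_gt_of_ne hwne' with h | h
      · have hδi : δ i = ((⌊x i⌋ : ℝ) - x i) / w i := by rw [hδ i, if_neg (by linarith)]
        constructor
        · have h1 : δ i * w i ≤ t * w i := mul_le_mul_of_nonpos_right (htle i hi) (le_of_lt h)
          have h2 : δ i * w i = (⌊x i⌋ : ℝ) - x i := by
            rw [hδi, div_mul_cancel₀ _ hwne']
          rw [hx'eq i]; linarith
        · have : t * w i ≤ 0 := mul_nonpos_of_nonneg_of_nonpos (le_of_lt ht) (le_of_lt h)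
          rw [hx'eq i]; linarith [Int.le_ceil (x i)]
      · have hδi : δ i = ((⌈x i⌉ : ℝ) - x i) / w i := by rw [hδ i, if_pos h]
        constructor
        · have : 0 ≤ t * w i := mul_nonneg (le_of_lt ht) (le_of_lt h)
          rw [hx'eq i]; linarith [Int.floor_le (x i)]
        · have h1 : t * w i ≤ δ i * w i := mul_le_mul_of_nonneg_right (htle i hi) (le_of_lt h)
          have h2 : δ i * w i = (⌈x i⌉ : ℝ) - x i := by
            rw [hδi, div_mul_cancel₀ _ hwne']
          rw [hx'eq i]; linarith
    have hxx' : ∀ i, i ∉ G → x' i = x i := by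
      intro i hi
      have hw : w i = 0 := by
        by_contra h; exact hi ((hGmem i).mpr h)
      rw [hx'eq i, hw, mul_zero, add_zero]
    refine ⟨x', ?_, ?_, ?_, ?_, ?_⟩
    · intro i
      by_cases hi : i ∈ G
      · have := (hbound i hi).1
        have h0 : (0 : ℝ) ≤ (⌊x i⌋ : ℝ) := by exact_mod_cast Int.floor_nonneg.mpr (hx0 i)
        linarith
      · rw [hxx' i hi]; exact hx0 i
    · intro i
      by_cases hi : i ∈ G
      · have := (hbound i hi).2
        have h0 : ((⌈x i⌉ : ℝ)) ≤ (u i : ℝ) := by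
          exact_mod_cast Int.ceil_le.mpr (by exact_mod_cast hxu i)
        linarith
      · rw [hxx' i hi]; exact hxu i
    · intro r
      have heq : ∑ i, (A r i : ℝ) * x' i
          = ∑ i, (A r i : ℝ) * x i + t * ∑ i, (A r i : ℝ) * w i := by
        rw [Finset.mul_sum, ← Finset.sum_add_distrib]
        exact Finset.sum_congr rfl fun i _ => by rw [hx'eq i]; ring
      rw [heq, hwrow r, mul_zero, add_zero]; exact hA r
    · have heq : ∑ i, c i * x' i = ∑ i, c i * x i + t * ∑ i, c i * w i := by
        rw [Finset.mul_sum, ← Finset.sum_add_distrib]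
        exact Finset.sum_congr rfl fun i _ => by rw [hx'eq i]; ring
      rw [heq]
      nlinarith [mul_nonneg (le_of_lt ht) hwc]
    · have hint : Int.fract (x' i₁) = 0 := by
        have hwne' : w i₁ ≠ 0 := (hGmem i₁).mp hi₁G
        rcases lt_or_gt_of_ne hwne' with h | h
        · have hval : x' i₁ = (⌊x i₁⌋ : ℝ) := by
            rw [hx'eq i₁, htδ, hδ i₁, if_neg (by linarith), div_mul_cancel₀ _ hwne']
            ring
          rw [hval, Int.fract_intCast]
        · have hval : x' i₁ = (⌈x i₁⌉ : ℝ) := by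
            rw [hx'eq i₁, htδ, hδ i₁, if_pos h, div_mul_cancel₀ _ hwne']
            ring
          rw [hval, Int.fract_intCast]
      have hsub : frSet x' ⊆ F.erase i₁ := by
        intro i hi
        rw [mem_frSet] at hi
        rw [Finset.mem_erase]
        constructor
        · rintro rfl; exact hi hint
        · by_contra h
          have hiG : i ∉ G := fun hG => h (hGF i hG)
          rw [hxx' i hiG] at hi
          exact h (by rw [hFdef, mem_frSet]; exact hi)
      calc (frSet x').card ≤ (F.erase i₁).card := Finset.card_le_card hsub
        _ < F.card := Finset.card_erase_lt_of_mem (hGF i₁ hi₁G)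
  rcases le_total 0 (∑ i, c i * w0 i) with h | h
  · exact main w0 hw0supp hw0row hw0ne h
  · refine main (fun i => -(w0 i)) (fun i hi => by show -(w0 i) = 0; rw [hw0supp i hi]; ring)
      (fun r => ?_) (by obtain ⟨i, hi⟩ := hw0ne; exact ⟨i, by simpa using hi⟩) ?_
    · have : ∑ i, (A r i : ℝ) * -(w0 i) = -∑ i, (A r i : ℝ) * w0 i := by
        rw [← Finset.sum_neg_distrib]; exact Finset.sum_congr rfl fun i _ => by ring
      rw [this, hw0row r, neg_zero]
    · have : ∑ i, c i * -(w0 i) = -∑ i, c i * w0 i := by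
        rw [← Finset.sum_neg_distrib]; exact Finset.sum_congr rfl fun i _ => by ring
      rw [this]; linarith
open Finset

lemma reduce_aux {n k : ℕ} (A : Matrix (Fin k) (Fin n) ℕ) (u : Fin n → ℕ) (β : Fin k → ℝ)
    (c : Fin n → ℝ) :
    ∀ m : ℕ, ∀ x : Fin n → ℝ, (∀ i, 0 ≤ x i) → (∀ i, x i ≤ u i) →
      (∀ r, ∑ i, (A r i : ℝ) * x i ≤ β r) → (frSet x).card ≤ m →
      ∃ x' : Fin n → ℝ, (∀ i, 0 ≤ x' i) ∧ (∀ i, x' i ≤ u i) ∧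
        (∀ r, ∑ i, (A r i : ℝ) * x' i ≤ β r) ∧
        (∑ i, c i * x i ≤ ∑ i, c i * x' i) ∧ (frSet x').card ≤ k := by
  intro m
  induction m with
  | zero =>
    intro x h0 hu hA hcard
    exact ⟨x, h0, hu, hA, le_refl _, by omega⟩
  | succ m ih =>
    intro x h0 hu hA hcard
    by_cases hk : (frSet x).card ≤ k
    · exact ⟨x, h0, hu, hA, le_refl _, hk⟩
    · obtain ⟨x'', h0'', hu'', hA'', hc'', hlt⟩ :=
        step_lemma A u β c x h0 hu hA (by omega)
      obtain ⟨x', h0', hu', hA', hc', hk'⟩ := ih x'' h0'' hu'' hA'' (by omega)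
      exact ⟨x', h0', hu', hA', le_trans hc'' hc', hk'⟩
/-- Packing version of the main theorem (value form): the disjunctive LP `L`
for `k`-dimensional knapsack has integrality gap at most `(1 - k/γ)⁻¹`:
for every fractional point `y` of `L` there is an integral feasible solution
`x` with `(1 - k/γ) · (c·y) ≤ c·x`. -/
theorem multidim_knapsack_integrality_gap (n k γ : ℕ) (hγ : 0 < γ) (hkγ : k ≤ γ)
    (A : Matrix (Fin k) (Fin n) ℕ) (b : Fin k → ℕ) (d : Fin n → ℕ)
    (c : Fin n → ℝ) (hc0 : ∀ i, 0 ≤ c i) (hcmono : Monotone c) :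
    ∀ y ∈ convexHull ℝ
      (⋃ g ∈ {g : Fin n → ℕ | g ≤ d ∧ A.mulVec g ≤ b ∧ ∑ i, g i ≤ γ},
        {y : Fin n → ℝ | ∃ x : Fin n → ℝ,
          y = x + (fun i => (g i : ℝ)) ∧ 0 ≤ x ∧
          (∀ i, x i ≤ ((if (∑ j, g j = γ) ∧ (∀ j, j < i → g j = 0)
              then ((d i : ℤ) - (g i : ℤ)) else 0 : ℤ) : ℝ)) ∧
          (∀ r : Fin k, ∑ i, (A r i : ℝ) * x i ≤
            ((if ∑ j, g j = γ
              then ((b r : ℤ) - ∑ i, (A r i : ℤ) * (g i : ℤ)) else 0 : ℤ) : ℝ))}),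
      ∃ x : Fin n → ℕ, x ≤ d ∧ A.mulVec x ≤ b ∧
        (1 - (k : ℝ) / γ) * (∑ i, c i * y i) ≤ ∑ i, c i * (x i : ℝ) := by
  classical
  -- the finite set of integral feasible solutions
  set T : Finset (Fin n → ℕ) :=
    (Fintype.piFinset fun i => Finset.range (d i + 1)).filter
      (fun z => z ≤ d ∧ A.mulVec z ≤ b) with hTdef
  have hmemT : ∀ z : Fin n → ℕ, z ≤ d → A.mulVec z ≤ b → z ∈ T := by
    intro z hzd hzb
    rw [hTdef, Finset.mem_filter]
    exact ⟨Fintype.mem_piFinset.mpr fun i => Finset.mem_range.mpr (by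
      exact Nat.lt_succ_of_le (hzd i)), hzd, hzb⟩
  have h0T : (fun _ => 0 : Fin n → ℕ) ∈ T := by
    refine hmemT _ (fun i => Nat.zero_le _) (fun r => ?_)
    simp [Matrix.mulVec, dotProduct]
  obtain ⟨xopt, hxoptT, hopt⟩ :=
    T.exists_max_image (fun z => ∑ i, c i * (z i : ℝ)) ⟨_, h0T⟩
  set OPT : ℝ := ∑ i, c i * (xopt i : ℝ) with hOPTdef
  have hOPT : ∀ z : Fin n → ℕ, z ≤ d → A.mulVec z ≤ b → ∑ i, c i * (z i : ℝ) ≤ OPT :=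
    fun z h1 h2 => hopt z (hmemT z h1 h2)
  have hOPT0 : 0 ≤ OPT := by
    have := hopt _ h0T
    simpa using this
  obtain ⟨hxd, hxb⟩ : xopt ≤ d ∧ A.mulVec xopt ≤ b := by
    rw [hTdef, Finset.mem_filter] at hxoptT; exact hxoptT.2
  have hγR : (0 : ℝ) < γ := by exact_mod_cast hγ
  have hfac0 : (0 : ℝ) ≤ 1 - (k : ℝ) / γ := by
    rw [sub_nonneg, div_le_one hγR]; exact_mod_cast hkγ
  intro y hy
  refine ⟨xopt, hxd, hxb, ?_⟩
  -- it suffices to show y lies in the halfspace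
  have hhalf : y ∈ {z : Fin n → ℝ | (1 - (k : ℝ) / γ) * (∑ i, c i * z i) ≤ OPT} := by
    refine convexHull_min ?_ (convex_halfSpace_le ⟨fun a b => by
        simp only [Pi.add_apply, mul_add, Finset.sum_add_distrib],
      fun r a => by
        simp only [Pi.smul_apply, smul_eq_mul]
        rw [show ∑ i, c i * (r * a i) = r * ∑ i, c i * a i by
          rw [Finset.mul_sum]; exact Finset.sum_congr rfl fun i _ => by ring]
        ring⟩ OPT) hy
    rintro p hp
    simp only [Set.mem_iUnion] at hp
    obtain ⟨g, hg, hpmem⟩ := hp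
    obtain ⟨hgd, hgb, hgγ⟩ := hg
    obtain ⟨x, hpx, hx0, hxu, hxA⟩ := hpmem
    by_cases hsum : ∑ j, g j = γ
    · -- the interesting case
      -- μ : the first index with g μ ≠ 0
      have hFgne : (Finset.univ.filter fun i => g i ≠ 0).Nonempty := by
        by_contra h
        rw [Finset.not_nonempty_iff_eq_empty, Finset.filter_eq_empty_iff] at h
        have : ∑ j, g j = 0 := Finset.sum_eq_zero fun i hi => by
          have := h hi; simpa using this
        omega
      set μ := (Finset.univ.filter fun i => g i ≠ 0).min' hFgne with hμdef
      have hμmem : g μ ≠ 0 := by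
        have := (Finset.univ.filter fun i => g i ≠ 0).min'_mem hFgne
        rw [Finset.mem_filter] at this; exact this.2
      have hμmin : ∀ j, j < μ → g j = 0 := by
        intro j hj
        by_contra h
        have : μ ≤ j := Finset.min'_le _ j (Finset.mem_filter.mpr ⟨Finset.mem_univ _, h⟩)
        omega
      -- the upper-bound vector
      set u : Fin n → ℕ := fun i => if ∀ j, j < i → g j = 0 then d i - g i else 0
        with hudef
      have hu : ∀ i, u i = if ∀ j, j < i → g j = 0 then d i - g i else 0 := fun i => rfl
      have hxu' : ∀ i, x i ≤ u i := by
        intro i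
        have h1 := hxu i
        by_cases hcond : ∀ j, j < i → g j = 0
        · rw [if_pos ⟨hsum, hcond⟩] at h1
          rw [hu i, if_pos hcond]
          have : ((d i - g i : ℕ) : ℝ) = ((d i : ℤ) - (g i : ℤ) : ℤ) := by
            have := hgd i
            push_cast [Nat.cast_sub this]
            ring
          rw [this]; exact h1
        · rw [if_neg (by tauto)] at h1
          rw [hu i, if_neg hcond]
          simpa using h1
      set β : Fin k → ℝ := fun r => (b r : ℝ) - ∑ i, (A r i : ℝ) * (g i : ℝ) with hβdef
      have hβ : ∀ r, β r = (b r : ℝ) - ∑ i, (A r i : ℝ) * (g i : ℝ) := fun r => rfl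
      have hxA' : ∀ r, ∑ i, (A r i : ℝ) * x i ≤ β r := by
        intro r
        have h1 := hxA r
        rw [if_pos hsum] at h1
        rw [hβ r]
        have : (((b r : ℤ) - ∑ i, (A r i : ℤ) * (g i : ℤ) : ℤ) : ℝ)
            = (b r : ℝ) - ∑ i, (A r i : ℝ) * (g i : ℝ) := by push_cast; ring
        rw [this] at h1; exact h1
      -- reduce the number of fractional coordinates
      obtain ⟨x', hx'0, hx'u, hx'A, hx'c, hx'k⟩ :=
        reduce_aux A u β c (frSet x).card x (fun i => hx0 i) hxu' hxA' le_rfl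
      -- the rounded integral solution
      set z : Fin n → ℕ := fun i => (⌊x' i⌋).toNat + g i with hzdef
      have hzval : ∀ i, (z i : ℝ) = ((⌊x' i⌋ : ℝ)) + (g i : ℝ) := by
        intro i
        have hfl0 : 0 ≤ ⌊x' i⌋ := Int.floor_nonneg.mpr (hx'0 i)
        have hcst : (((⌊x' i⌋).toNat : ℕ) : ℝ) = ((⌊x' i⌋ : ℝ)) := by
          exact_mod_cast congrArg (fun z : ℤ => (z : ℝ)) (Int.toNat_of_nonneg hfl0)
        show (((⌊x' i⌋).toNat + g i : ℕ) : ℝ) = _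
        push_cast
        rw [hcst]
      have hfl_le : ∀ i, ((⌊x' i⌋ : ℝ)) ≤ (u i : ℝ) := by
        intro i
        calc ((⌊x' i⌋ : ℝ)) ≤ x' i := Int.floor_le _
          _ ≤ u i := hx'u i
      have hzd : z ≤ d := by
        intro i
        have h1 : (⌊x' i⌋).toNat ≤ u i := by
          have : (⌊x' i⌋ : ℝ) ≤ (u i : ℝ) := hfl_le i
          have h2 : ⌊x' i⌋ ≤ (u i : ℤ) := by exact_mod_cast this
          omega
        have h2 : u i + g i ≤ d i := by
          have hgi : g i ≤ d i := hgd i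
          rw [hu i]
          split_ifs
          · omega
          · omega
        show (⌊x' i⌋).toNat + g i ≤ d i
        omega
      have hzb : A.mulVec z ≤ b := by
        intro r
        have hreal : ∑ i, (A r i : ℝ) * (z i : ℝ) ≤ (b r : ℝ) := by
          have h1 : ∑ i, (A r i : ℝ) * (z i : ℝ)
              = ∑ i, (A r i : ℝ) * ((⌊x' i⌋ : ℝ)) + ∑ i, (A r i : ℝ) * (g i : ℝ) := by
            rw [← Finset.sum_add_distrib]
            exact Finset.sum_congr rfl fun i _ => by rw [hzval i]; ring
          have h2 : ∑ i, (A r i : ℝ) * ((⌊x' i⌋ : ℝ)) ≤ ∑ i, (A r i : ℝ) * x' i :=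
            Finset.sum_le_sum fun i _ =>
              mul_le_mul_of_nonneg_left (Int.floor_le _) (by positivity)
          have h3 := hx'A r
          rw [hβ r] at h3
          linarith
        have hcast : ((A.mulVec z r : ℕ) : ℝ) = ∑ i, (A r i : ℝ) * (z i : ℝ) := by
          simp [Matrix.mulVec, dotProduct]
        have : ((A.mulVec z r : ℕ) : ℝ) ≤ ((b r : ℕ) : ℝ) := by rw [hcast]; exact hreal
        exact_mod_cast this
      -- indices with positive bound are ≤ μ, hence c i ≤ c μ there
      have hle_cμ : ∀ i, u i ≠ 0 → c i ≤ c μ := by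
        intro i hui
        have hcond : ∀ j, j < i → g j = 0 := by
          by_contra h
          rw [hu i, if_neg h] at hui
          exact hui rfl
        have hiμ : i ≤ μ := by
          by_contra h
          push_neg at h
          exact hμmem (hcond μ h)
        exact hcmono hiμ
      -- the rounding loss is at most k * c μ
      have hloss : ∑ i, c i * x' i ≤ (∑ i, c i * ((⌊x' i⌋ : ℝ))) + (k : ℝ) * c μ := by
        have h1 : ∑ i, c i * x' i - ∑ i, c i * ((⌊x' i⌋ : ℝ))
            = ∑ i, c i * Int.fract (x' i) := by
          rw [← Finset.sum_sub_distrib]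
          exact Finset.sum_congr rfl fun i _ => by
            rw [← Int.self_sub_floor]; ring
        have h2 : ∑ i, c i * Int.fract (x' i) = ∑ i ∈ frSet x', c i * Int.fract (x' i) := by
          refine (Finset.sum_subset (Finset.subset_univ _) ?_).symm
          intro i _ hi
          rw [mem_frSet, not_not] at hi
          rw [hi, mul_zero]
        have h3 : ∑ i ∈ frSet x', c i * Int.fract (x' i) ≤ ∑ _i ∈ frSet x', c μ := by
          refine Finset.sum_le_sum fun i hi => ?_
          rw [mem_frSet] at hi
          have hx'pos : 0 < x' i := by
            rcases lt_or_eq_of_le (hx'0 i) with h | h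
            · exact h
            · exact absurd (by rw [← h]; norm_num) hi
          have hui : u i ≠ 0 := by
            intro h
            have := hx'u i
            rw [h] at this
            simp at this
            linarith
          calc c i * Int.fract (x' i) ≤ c i * 1 :=
                mul_le_mul_of_nonneg_left (le_of_lt (Int.fract_lt_one _)) (hc0 i)
            _ = c i := mul_one _
            _ ≤ c μ := hle_cμ i hui
        have h4 : ∑ _i ∈ frSet x', c μ = ((frSet x').card : ℝ) * c μ := by
          rw [Finset.sum_const, nsmul_eq_mul]
        have h5 : ((frSet x').card : ℝ) * c μ ≤ (k : ℝ) * c μ := by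
          apply mul_le_mul_of_nonneg_right _ (hc0 μ)
          exact_mod_cast hx'k
        linarith
      -- c·g is at least γ * c μ
      have hcg : (γ : ℝ) * c μ ≤ ∑ i, c i * (g i : ℝ) := by
        have h1 : ∑ i, c μ * (g i : ℝ) ≤ ∑ i, c i * (g i : ℝ) := by
          refine Finset.sum_le_sum fun i _ => ?_
          rcases Nat.eq_zero_or_pos (g i) with h | h
          · rw [h]; norm_num
          · have hμi : μ ≤ i := Finset.min'_le _ i
              (Finset.mem_filter.mpr ⟨Finset.mem_univ _, by omega⟩)
            exact mul_le_mul_of_nonneg_right (hcmono hμi) (by positivity)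
        have h2 : ∑ i, c μ * (g i : ℝ) = (γ : ℝ) * c μ := by
          rw [← Finset.mul_sum]
          rw [show ∑ i, ((g i : ℝ)) = ((∑ i, g i : ℕ) : ℝ) by push_cast; ring]
          rw [hsum]; ring
        linarith
      -- assemble
      have hzT : ∑ i, c i * (z i : ℝ) ≤ OPT := hOPT z hzd hzb
      have hgT : ∑ i, c i * (g i : ℝ) ≤ OPT := hOPT g hgd hgb
      have hzsum : ∑ i, c i * (z i : ℝ)
          = ∑ i, c i * ((⌊x' i⌋ : ℝ)) + ∑ i, c i * (g i : ℝ) := by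
        rw [← Finset.sum_add_distrib]
        exact Finset.sum_congr rfl fun i _ => by rw [hzval i]; ring
      have hpsum : ∑ i, c i * p i = ∑ i, c i * x i + ∑ i, c i * (g i : ℝ) := by
        rw [hpx, ← Finset.sum_add_distrib]
        exact Finset.sum_congr rfl fun i _ => by simp [mul_add]
      have hP : ∑ i, c i * p i ≤ OPT + (k : ℝ) * c μ := by
        rw [hpsum]
        have := hx'c
        linarith [hzT, hzsum, hloss]
      show (1 - (k : ℝ) / γ) * (∑ i, c i * p i) ≤ OPT
      have hcgOPT : (γ : ℝ) * c μ ≤ OPT := le_trans hcg hgT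
      have hk0 : (0 : ℝ) ≤ (k : ℝ) := by positivity
      have hkγR : (k : ℝ) ≤ (γ : ℝ) := by exact_mod_cast hkγ
      have hrw : (1 - (k : ℝ) / γ) = ((γ : ℝ) - k) / γ := by field_simp
      rw [hrw, div_mul_eq_mul_div, div_le_iff₀ hγR]
      nlinarith [mul_nonneg (sub_nonneg.2 hkγR) (sub_nonneg.2 hP),
        mul_nonneg hk0 (sub_nonneg.2 hcgOPT),
        mul_nonneg (mul_nonneg hk0 hk0) (hc0 μ)]
    · -- degenerate case: x = 0 and p is itself integral
      have hx00 : ∀ i, x i = 0 := by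
        intro i
        have h1 := hxu i
        rw [if_neg (by tauto)] at h1
        have h2 : (0 : ℝ) ≤ x i := hx0 i
        simp at h1
        linarith
      have hpg : ∑ i, c i * p i = ∑ i, c i * (g i : ℝ) := by
        rw [hpx]
        exact Finset.sum_congr rfl fun i _ => by simp [hx00 i]
      have hgT : ∑ i, c i * (g i : ℝ) ≤ OPT := hOPT g hgd hgb
      have hS0 : 0 ≤ ∑ i, c i * (g i : ℝ) :=
        Finset.sum_nonneg fun i _ => mul_nonneg (hc0 i) (by positivity)
      have hfac1 : 1 - (k : ℝ) / γ ≤ 1 := by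
        have : (0 : ℝ) ≤ (k : ℝ) / γ := by positivity
        linarith
      show (1 - (k : ℝ) / γ) * (∑ i, c i * p i) ≤ OPT
      rw [hpg]
      calc (1 - (k : ℝ) / γ) * (∑ i, c i * (g i : ℝ))
          ≤ 1 * (∑ i, c i * (g i : ℝ)) := mul_le_mul_of_nonneg_right hfac1 hS0
        _ = ∑ i, c i * (g i : ℝ) := one_mul _
        _ ≤ OPT := hgT
  exact hhalf
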